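/- Let f : ℝ^d → ℝ be a convex function such that for every y ∈ ℝ^d, if the function z ↦ ⟨y, z⟩ − f(z) is bounded above on ℝ^d, then ⟨y, x⟩ − f(x) ≤ 0 for all x ∈ ℝ^d (i.e. the convex conjugate f* is nonpositive on its effective domain). Define h : ℝ^d → ℝ by h(x) = ‖x‖ · f(x/‖x‖) for x ≠ 0 and h(0) = 0. Then h is sublinear, i.e. convex and positively homogeneous. -/

import Mathlib

open RealInnerProductSpace

lemma aux_subgrad {d : ℕ} (f : EuclideanSpace ℝ (Fin d) → ℝ)
    (hconv : ConvexOn ℝ Set.univ f) (x₀ : EuclideanSpace ℝ (Fin d)) :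
    ∃ y : EuclideanSpace ℝ (Fin d), ∀ z, ⟪y, z⟫ - f z ≤ ⟪y, x₀⟫ - f x₀ := by
  have hcont : Continuous f :=
    continuousOn_univ.mp (hconv.continuousOn isOpen_univ)
  set S : Set (EuclideanSpace ℝ (Fin d) × ℝ) := {p | f p.1 < p.2} with hS
  have hSopen : IsOpen S := isOpen_lt (hcont.comp continuous_fst) continuous_snd
  have hSconv : Convex ℝ S := by
    rintro p hp q hq a b ha hb hab
    simp only [hS, Set.mem_setOf_eq] at *
    have h1 := hconv.2 (Set.mem_univ p.1) (Set.mem_univ q.1) ha hb hab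
    have h2 : a * f p.1 + b * f q.1 < a * p.2 + b * q.2 := by
      rcases ha.lt_or_eq with ha' | ha'
      · have hbq : b * f q.1 ≤ b * q.2 := mul_le_mul_of_nonneg_left hq.le hb
        have : a * f p.1 < a * p.2 := by exact mul_lt_mul_of_pos_left hp ha'
        linarith
      · have hb1 : b = 1 := by linarith
        simp [← ha', hb1, hq]
    calc f (a • p + b • q).1 = f (a • p.1 + b • q.1) := rfl
      _ ≤ a * f p.1 + b * f q.1 := h1
      _ < a * p.2 + b * q.2 := h2
      _ = (a • p + b • q).2 := rfl
  have hx : (x₀, f x₀) ∉ S := by simp [hS]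
  obtain ⟨φ, hφ⟩ := geometric_hahn_banach_open_point hSconv hSopen hx
  set α : ℝ := φ (0, 1) with hαdef
  have hsplit : ∀ (z : EuclideanSpace ℝ (Fin d)) (t : ℝ), φ (z, t) = φ (z, 0) + t * α := by
    intro z t
    have : (z, t) = (z, (0:ℝ)) + t • ((0 : EuclideanSpace ℝ (Fin d)), (1:ℝ)) := by
      simp [Prod.ext_iff]
    rw [this, map_add, map_smul, smul_eq_mul, hαdef]
  have hα : α < 0 := by
    have h1 := hφ (x₀, f x₀ + 1) (by simp [hS])
    rw [hsplit x₀ (f x₀ + 1), hsplit x₀ (f x₀)] at h1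
    nlinarith
  have key : ∀ z, φ (z, 0) + α * f z ≤ φ (x₀, 0) + α * f x₀ := by
    intro z
    apply le_of_forall_pos_le_add
    intro ε hε
    have h1 := hφ (z, f z + ε * (-α)⁻¹) (by simp only [hS, Set.mem_setOf_eq]; nlinarith [mul_pos hε (inv_pos.2 (neg_pos.2 hα))])
    rw [hsplit z _, hsplit x₀ _] at h1
    have hα' : α ≠ 0 := ne_of_lt hα
    have hα'' : -α ≠ 0 := neg_ne_zero.2 hα'
    have : (f z + ε * (-α)⁻¹) * α = f z * α - ε := by
      field_simp
      ring
    nlinarith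
  refine ⟨(InnerProductSpace.toDual ℝ _).symm
    ((-α)⁻¹ • (φ.comp (ContinuousLinearMap.inl ℝ _ ℝ))), fun z => ?_⟩
  have hy : ∀ w : EuclideanSpace ℝ (Fin d),
      ⟪(InnerProductSpace.toDual ℝ _).symm
        ((-α)⁻¹ • (φ.comp (ContinuousLinearMap.inl ℝ _ ℝ))), w⟫ = (-α)⁻¹ * φ (w, 0) := by
    intro w
    rw [InnerProductSpace.toDual_symm_apply]
    rfl
  rw [hy z, hy x₀]
  have hα' : α ≠ 0 := ne_of_lt hα
  have hβ : (0:ℝ) < (-α)⁻¹ := inv_pos.2 (neg_pos.2 hα)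
  have hk := key z
  have hc : (-α)⁻¹ * α = -1 := by
    rw [inv_neg, neg_mul, inv_mul_cancel₀ hα']
  have h2 := mul_le_mul_of_nonneg_left hk hβ.le
  rw [mul_add, mul_add, ← mul_assoc, ← mul_assoc, hc, neg_one_mul] at h2
  linarith

/-- Let `f : ℝ^d → ℝ` be convex with convex conjugate `f*` nonpositive on its
effective domain (i.e. whenever `z ↦ ⟪y, z⟫ - f z` is bounded above, `⟪y, x⟫ - f x ≤ 0` for
all `x`).  Let `h x = ‖x‖ * f (x / ‖x‖)` for `x ≠ 0` and `h 0 = 0`. Then `h` is sublinear,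
i.e. convex and positively homogeneous. -/
theorem stmt_2 {d : ℕ} (f : EuclideanSpace ℝ (Fin d) → ℝ)
    (hconv : ConvexOn ℝ Set.univ f)
    (hconj : ∀ y : EuclideanSpace ℝ (Fin d),
      BddAbove (Set.range fun z => ⟪y, z⟫ - f z) →
      ∀ x : EuclideanSpace ℝ (Fin d), ⟪y, x⟫ - f x ≤ 0)
    (h : EuclideanSpace ℝ (Fin d) → ℝ)
    (hh : ∀ x : EuclideanSpace ℝ (Fin d), x ≠ 0 → h x = ‖x‖ * f (‖x‖⁻¹ • x))
    (hh0 : h 0 = 0) :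
    ConvexOn ℝ Set.univ h ∧ ∀ c : ℝ, 0 ≤ c → ∀ x, h (c • x) = c * h x := by

  -- every subgradient point gives a global linear minorant through the origin
  have hsupp : ∀ x₀ : EuclideanSpace ℝ (Fin d), ∃ y, (∀ z, ⟪y, z⟫ ≤ f z) ∧
      (∀ z, ⟪y, z⟫ - f z ≤ ⟪y, x₀⟫ - f x₀) := by
    intro x₀
    obtain ⟨y, hy⟩ := aux_subgrad f hconv x₀
    have hbdd : BddAbove (Set.range fun z => ⟪y, z⟫ - f z) := by
      refine ⟨⟪y, x₀⟫ - f x₀, ?_⟩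
      rintro _ ⟨z, rfl⟩
      exact hy z
    exact ⟨y, fun z => by linarith [hconj y hbdd z], hy⟩
  have hf0 : 0 ≤ f 0 := by
    obtain ⟨y, hy1, _⟩ := hsupp 0
    simpa using hy1 0
  -- monotonicity: for 0 < μ ≤ λ, λ * f (μ • u) ≥ μ * f (λ • u)
  have hmono : ∀ (u : EuclideanSpace ℝ (Fin d)) (mu lam : ℝ), 0 < mu → mu ≤ lam →
      mu * f (lam • u) ≤ lam * f (mu • u) := by
    intro u mu lam hmu hml
    have hlam : 0 < lam := lt_of_lt_of_le hmu hml
    obtain ⟨y, hy1, hy2⟩ := hsupp (lam • u)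
    have h1 := hy2 (mu • u)
    have h2 := hy1 (lam • u)
    rw [real_inner_smul_right] at h1 h2
    rw [real_inner_smul_right] at h1
    set t := ⟪y, u⟫
    nlinarith [mul_le_mul_of_nonneg_left h1 hlam.le,
      mul_le_mul_of_nonneg_right h2 (sub_nonneg.2 hml)]
  -- positive homogeneity
  have hhom : ∀ c : ℝ, 0 ≤ c → ∀ x, h (c • x) = c * h x := by
    intro c hc x
    rcases hc.lt_or_eq with hc' | hc'
    · rcases eq_or_ne x 0 with rfl | hx
      · simp [hh0]
      · have hcx : c • x ≠ 0 := smul_ne_zero hc'.ne' hx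
        rw [hh _ hcx, hh _ hx]
        have hnx : (0:ℝ) < ‖x‖ := norm_pos_iff.mpr hx
        have hn : ‖c • x‖ = c * ‖x‖ := by rw [norm_smul, Real.norm_eq_abs, abs_of_pos hc']
        rw [hn]
        have : (c * ‖x‖)⁻¹ • (c • x) = ‖x‖⁻¹ • x := by
          rw [smul_smul]
          congr 1
          field_simp
        rw [this]; ring
    · simp [← hc', hh0]
  -- subadditivity
  have hsub : ∀ x y : EuclideanSpace ℝ (Fin d), h (x + y) ≤ h x + h y := by
    intro x y
    rcases eq_or_ne x 0 with rfl | hx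
    · simp [hh0]
    rcases eq_or_ne y 0 with rfl | hy
    · simp [hh0]
    have hnx : (0:ℝ) < ‖x‖ := norm_pos_iff.mpr hx
    have hny : (0:ℝ) < ‖y‖ := norm_pos_iff.mpr hy
    set s : ℝ := ‖x‖ + ‖y‖ with hsdef
    have hs : 0 < s := by positivity
    -- the convex combination bound
    have hcomb : s * f (s⁻¹ • (x + y)) ≤ h x + h y := by
      have ha : (0:ℝ) ≤ ‖x‖ / s := by positivity
      have hb : (0:ℝ) ≤ ‖y‖ / s := by positivity
      have hab : ‖x‖ / s + ‖y‖ / s = 1 := by field_simp; exact hsdef.symm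
      have hcomb0 := hconv.2 (Set.mem_univ (‖x‖⁻¹ • x)) (Set.mem_univ (‖y‖⁻¹ • y)) ha hb hab
      have heq : (‖x‖ / s) • (‖x‖⁻¹ • x) + (‖y‖ / s) • (‖y‖⁻¹ • y) = s⁻¹ • (x + y) := by
        have e1 : ‖x‖ / s * ‖x‖⁻¹ = s⁻¹ := by field_simp
        have e2 : ‖y‖ / s * ‖y‖⁻¹ = s⁻¹ := by field_simp
        rw [smul_smul, smul_smul, e1, e2, ← smul_add]
      rw [heq] at hcomb0
      rw [hh x hx, hh y hy]
      calc s * f (s⁻¹ • (x + y)) ≤ s * (‖x‖ / s * f (‖x‖⁻¹ • x) + ‖y‖ / s * f (‖y‖⁻¹ • y)) :=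
            mul_le_mul_of_nonneg_left hcomb0 hs.le
        _ = ‖x‖ * f (‖x‖⁻¹ • x) + ‖y‖ * f (‖y‖⁻¹ • y) := by field_simp <;> ring
    rcases eq_or_ne (x + y) 0 with hxy | hxy
    · rw [hxy, hh0]
      have h0 : f 0 ≤ f (s⁻¹ • (x + y)) * 1 := by rw [hxy, smul_zero]; linarith
      nlinarith [hcomb, hf0, hs]
    · have hr : (0:ℝ) < ‖x + y‖ := norm_pos_iff.mpr hxy
      have hrs : ‖x + y‖ ≤ s := norm_add_le x y
      rw [hh _ hxy]
      have hm := hmono (x + y) s⁻¹ ‖x + y‖⁻¹ (by positivity)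
        (by exact inv_anti₀ hr hrs)
      -- hm : s⁻¹ * f (‖x+y‖⁻¹ • (x+y)) ≤ ‖x+y‖⁻¹ * f (s⁻¹ • (x+y))
      have : ‖x + y‖ * f (‖x + y‖⁻¹ • (x + y)) ≤ s * f (s⁻¹ • (x + y)) := by
        have := mul_le_mul_of_nonneg_left hm (by positivity : (0:ℝ) ≤ ‖x + y‖ * s)
        calc ‖x + y‖ * f (‖x + y‖⁻¹ • (x + y))
            = ‖x + y‖ * s * (s⁻¹ * f (‖x + y‖⁻¹ • (x + y))) := by field_simp <;> ring
          _ ≤ ‖x + y‖ * s * (‖x + y‖⁻¹ * f (s⁻¹ • (x + y))) := this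
          _ = s * f (s⁻¹ • (x + y)) := by field_simp <;> ring
      linarith
  constructor
  · refine ⟨convex_univ, fun x _ y _ a b ha hb hab => ?_⟩
    calc h (a • x + b • y) ≤ h (a • x) + h (b • y) := hsub _ _
      _ = a * h x + b * h y := by rw [hhom a ha x, hhom b hb y]
      _ = a • h x + b • h y := rfl
  · exact hhom
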